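/- Pointwise convergence to 0 from property (T): if 𝓑 ⊆ Bor(2^ℕ) contains Clopen(2^ℕ) and has property (T), then for every A ∈ 𝓑, n·(λ(A ∩ V_n^0) − λ(A ∩ V_n^1)) → 0 as n → ∞. -/

import Mathlib

open MeasureTheory Set Filter

noncomputable section

/-- The Cantor space `2^ℕ`, realized as the compact group `(ℤ/2)^ℕ`. -/
abbrev Cantor : Type := ℕ → ZMod 2

/-- The standard product (Haar) probability measure `λ` on `2^ℕ`. -/
def lam : Measure Cantor := Measure.addHaarMeasure ⊤

/-- `V m i = {x ∈ 2^ℕ : x m = i}`. -/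
def V (m : ℕ) (i : ZMod 2) : Set Cantor := {x | x m = i}

/-- `φ_m(A) = |λ(A ∩ V_m^0) − λ(A ∩ V_m^1)|`. -/
def phi (m : ℕ) (A : Set Cantor) : ℝ :=
  |(lam (A ∩ V m 0)).toReal - (lam (A ∩ V m 1)).toReal|

/-- `ψ_m(A,B)`. -/
def psi (m : ℕ) (A B : Set Cantor) : ℝ :=
  |((lam (A ∩ V m 0)).toReal - (lam (A ∩ V m 1)).toReal) -
   ((lam (B ∩ V m 0)).toReal - (lam (B ∩ V m 1)).toReal)|

/-- `U` is an atom of the algebra `𝓐_n` generated by coordinates `0,…,n`: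
a basic cylinder determined by the first `n+1` coordinates. -/
def IsAtomOf (n : ℕ) (U : Set Cantor) : Prop :=
  ∃ σ : Fin (n + 1) → ZMod 2, U = {x | ∀ i : Fin (n + 1), x i = σ i}

/-- Membership in the algebra `𝓐_n`: the set depends only on coordinates `0,…,n`. -/
def MemA (n : ℕ) (S : Set Cantor) : Prop :=
  ∃ T : Set (Fin (n + 1) → ZMod 2), S = {x | (fun i : Fin (n + 1) => x i) ∈ T}

/-- `B` is a Boolean subalgebra of `Bor(2^ℕ)`. -/
def IsBorelSubalgebra (B : Set (Set Cantor)) : Prop :=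
  (∀ A ∈ B, MeasurableSet A) ∧ univ ∈ B ∧ (∀ A ∈ B, Aᶜ ∈ B) ∧
    (∀ A ∈ B, ∀ C ∈ B, A ∪ C ∈ B)

/-- `B` contains `Clopen(2^ℕ)`. -/
def ContainsClopen (B : Set (Set Cantor)) : Prop :=
  ∀ A : Set Cantor, IsClopen A → A ∈ B

/-- Property (T) of a subalgebra of `Bor(2^ℕ)`. -/
def HasPropT (B : Set (Set Cantor)) : Prop :=
  ∀ (p : ℕ) (A : Fin p → Set Cantor), (∀ i, A i ∈ B) → ∀ ε : ℝ, 0 < ε →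
    ∃ n : ℕ, 0 < n ∧ ∀ U : Set Cantor, IsAtomOf n U → ∀ i : Fin p,
      ((lam (A i ∩ U)).toReal ≤ ε * (lam U).toReal / n ∨
        (lam (U \ A i)).toReal ≤ ε * (lam U).toReal / n) ∧
      ∀ m : ℕ, n < m → phi m (A i ∩ U) ≤ ε * (lam U).toReal / m

/-- The basic cylinder determined by the first `n+1` coordinates. -/
def cyl (n : ℕ) (σ : Fin (n + 1) → ZMod 2) : Set Cantor :=
  {x | ∀ i : Fin (n + 1), x i = σ i}

lemma measurableSet_cyl (n : ℕ) (σ : Fin (n + 1) → ZMod 2) :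
    MeasurableSet (cyl n σ) := by
  have : cyl n σ = ⋂ i : Fin (n + 1), (fun x : Cantor => x i) ⁻¹' {σ i} := by
    ext x; simp [cyl, Set.mem_iInter]
  rw [this]
  exact MeasurableSet.iInter fun i => (measurable_pi_apply _) (measurableSet_singleton _)

lemma lam_univ : lam univ = 1 := by
  rw [lam, ← TopologicalSpace.PositiveCompacts.coe_top (α := Cantor)]
  exact Measure.addHaarMeasure_self

instance : IsProbabilityMeasure lam := ⟨lam_univ⟩

/-- Decomposition of the measure of a set over the atoms of `𝓐_n`. -/
lemma lam_eq_sum (n : ℕ) (s : Set Cantor) (hs : MeasurableSet s) :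
    lam s = ∑ σ : Fin (n + 1) → ZMod 2, lam (s ∩ cyl n σ) := by
  have hcover : s = ⋃ σ : Fin (n + 1) → ZMod 2, s ∩ cyl n σ := by
    ext x
    simp only [Set.mem_iUnion, Set.mem_inter_iff]
    constructor
    · intro hx; exact ⟨fun i => x i, hx, fun i => rfl⟩
    · rintro ⟨σ, hx, _⟩; exact hx
  have hdisj : Pairwise (Function.onFun Disjoint
      (fun σ : Fin (n + 1) → ZMod 2 => s ∩ cyl n σ)) := by
    intro σ τ hστ
    refine Set.disjoint_left.2 fun x hx hx' => hστ ?_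
    funext i
    rw [← hx.2 i, ← hx'.2 i]
  rw [← tsum_fintype (L := SummationFilter.unconditional _)]
  conv_lhs => rw [hcover]
  exact measure_iUnion hdisj fun σ => hs.inter (measurableSet_cyl n σ)

lemma lam_toReal_eq_sum (n : ℕ) (s : Set Cantor) (hs : MeasurableSet s) :
    (lam s).toReal = ∑ σ : Fin (n + 1) → ZMod 2, (lam (s ∩ cyl n σ)).toReal := by
  rw [lam_eq_sum n s hs, ENNReal.toReal_sum]
  intro σ _
  exact measure_ne_top lam _

lemma sum_cyl_toReal (n : ℕ) :
    ∑ σ : Fin (n + 1) → ZMod 2, (lam (cyl n σ)).toReal = 1 := by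
  have := lam_toReal_eq_sum n univ MeasurableSet.univ
  simp only [Set.univ_inter] at this
  rw [← this, lam_univ]
  simp

lemma measurableSet_V (m : ℕ) (i : ZMod 2) : MeasurableSet (V m i) := by
  have : V m i = (fun x : Cantor => x m) ⁻¹' {i} := rfl
  rw [this]
  exact (measurable_pi_apply m) (measurableSet_singleton i)

theorem stmt14 (B : Set (Set Cantor)) (hB : IsBorelSubalgebra B)
    (hclopen : ContainsClopen B) (hT : HasPropT B) :
    ∀ A ∈ B, Tendsto
      (fun n : ℕ => (n : ℝ) * ((lam (A ∩ V n 0)).toReal - (lam (A ∩ V n 1)).toReal))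
      atTop (nhds 0) := by
  intro A hA
  have hAm : MeasurableSet A := hB.1 A hA
  rw [NormedAddCommGroup.tendsto_nhds_zero]
  intro ε hε
  obtain ⟨n, hn, hprop⟩ := hT 1 (fun _ => A) (fun _ => hA) (ε / 2) (by linarith)
  filter_upwards [eventually_gt_atTop n] with m hm
  have hm0 : (0 : ℝ) < m := by
    exact_mod_cast lt_of_le_of_lt (Nat.zero_le n) hm
  -- decompose each measure over atoms
  have hdec : ∀ i : ZMod 2, (lam (A ∩ V m i)).toReal =
      ∑ σ : Fin (n + 1) → ZMod 2, (lam (A ∩ cyl n σ ∩ V m i)).toReal := by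
    intro i
    rw [lam_toReal_eq_sum n (A ∩ V m i) (hAm.inter (measurableSet_V m i))]
    congr 1
    funext σ
    congr 2
    ext x
    simp only [Set.mem_inter_iff]
    tauto
  have key : |(lam (A ∩ V m 0)).toReal - (lam (A ∩ V m 1)).toReal| ≤ ε / 2 / m := by
    rw [hdec 0, hdec 1, ← Finset.sum_sub_distrib]
    calc |∑ σ : Fin (n + 1) → ZMod 2,
            ((lam (A ∩ cyl n σ ∩ V m 0)).toReal - (lam (A ∩ cyl n σ ∩ V m 1)).toReal)|
        ≤ ∑ σ : Fin (n + 1) → ZMod 2,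
            |(lam (A ∩ cyl n σ ∩ V m 0)).toReal - (lam (A ∩ cyl n σ ∩ V m 1)).toReal| :=
          Finset.abs_sum_le_sum_abs _ _
      _ ≤ ∑ σ : Fin (n + 1) → ZMod 2, ε / 2 * (lam (cyl n σ)).toReal / m := by
          refine Finset.sum_le_sum fun σ _ => ?_
          have := (hprop (cyl n σ) ⟨σ, rfl⟩ 0).2 m hm
          simpa [phi] using this
      _ = ε / 2 / m := by
          rw [← Finset.sum_div, ← Finset.mul_sum, sum_cyl_toReal]
          ring
  have : ‖(m : ℝ) * ((lam (A ∩ V m 0)).toReal - (lam (A ∩ V m 1)).toReal)‖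
      = (m : ℝ) * |(lam (A ∩ V m 0)).toReal - (lam (A ∩ V m 1)).toReal| := by
    rw [Real.norm_eq_abs, abs_mul, abs_of_nonneg hm0.le]
  rw [this]
  calc (m : ℝ) * |(lam (A ∩ V m 0)).toReal - (lam (A ∩ V m 1)).toReal|
      ≤ (m : ℝ) * (ε / 2 / m) := by
        exact mul_le_mul_of_nonneg_left key hm0.le
    _ = ε / 2 := by field_simp
    _ < ε := by linarith
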